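/- Let w : ℝ → (0,∞) be continuous and let x ∈ L²_w(ℝ) be such that w·x is locally absolutely continuous on ℝ and its almost-everywhere derivative (w·x)′ belongs to L²_w(ℝ). Then the function w·x is bounded on ℝ; in fact |(w·x)(ξ)|² ≤ |(w·x)(0)|² + 2‖x‖_{L²_w(ℝ)}·‖(w·x)′‖_{L²_w(ℝ)} for every ξ ∈ ℝ. -/

import Mathlib

open MeasureTheory Filter Set Topology

open ComplexConjugate


lemma energy_aux {g : ℝ → ℂ} {a b : ℝ} (hgi : IntegrableOn g (Ioc a b)) :
    ‖∫ t in Ioc a b, g t‖ ^ 2 =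
      2 * (∫ t in Ioc a b, conj (∫ s in Ioc a t, g s) * g t).re := by
  set μ := volume.restrict (Ioc a b) with hμ
  have hμg : Integrable g μ := hgi
  have hμgc : Integrable (fun s => conj (g s)) μ :=
    hμg.mono (Complex.continuous_conj.comp_aestronglyMeasurable hμg.1)
      (Filter.Eventually.of_forall fun s => by simp)
  set K : ℝ × ℝ → ℂ := fun p => conj (g p.1) * g p.2 with hK_def
  have hK : Integrable K (μ.prod μ) := hμgc.mul_prod hμg
  have hs : MeasurableSet {p : ℝ × ℝ | p.1 < p.2} :=
    measurableSet_lt measurable_fst measurable_snd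
  have hs' : MeasurableSet {p : ℝ × ℝ | p.2 < p.1} :=
    measurableSet_lt measurable_snd measurable_fst
  set S : ℂ := ∫ p, ({p : ℝ × ℝ | p.1 < p.2}.indicator K) p ∂(μ.prod μ) with hS_def
  -- diagonal is null
  have hdiag : (μ.prod μ) {p : ℝ × ℝ | p.1 = p.2} = 0 := by
    have hD : MeasurableSet {p : ℝ × ℝ | p.1 = p.2} :=
      measurableSet_eq_fun measurable_fst measurable_snd
    rw [Measure.prod_apply hD]
    have : ∀ s : ℝ, μ (Prod.mk s ⁻¹' {p : ℝ × ℝ | p.1 = p.2}) = 0 := by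
      intro s
      have : Prod.mk s ⁻¹' {p : ℝ × ℝ | p.1 = p.2} = {s} := by
        ext t; simp [eq_comm]
      rw [this]
      exact le_antisymm (le_trans (Measure.restrict_le_self _) (by simp)) (by simp)
    simp [this]
  -- conj S
  have hconjS : conj S = ∫ p, ({p : ℝ × ℝ | p.2 < p.1}.indicator K) p ∂(μ.prod μ) := by
    rw [hS_def, ← integral_conj]
    have h1 : ∀ p : ℝ × ℝ, conj (({p : ℝ × ℝ | p.1 < p.2}.indicator K) p)
        = ({p : ℝ × ℝ | p.1 < p.2}.indicator fun p => g p.1 * conj (g p.2)) p := by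
      intro p
      by_cases h : p ∈ {p : ℝ × ℝ | p.1 < p.2} <;>
        simp [Set.indicator_of_mem, Set.indicator_of_notMem, h, hK_def, mul_comm]
    simp_rw [h1]
    rw [← integral_prod_swap]
    congr 1
    ext z
    by_cases h : z.2 < z.1 <;>
      simp [Set.indicator, h, hK_def, mul_comm, Prod.swap]
  -- sum
  have hsum : S + conj S = ∫ p, K p ∂(μ.prod μ) := by
    rw [hS_def, hconjS, ← integral_add (hK.indicator hs) (hK.indicator hs')]
    refine integral_congr_ae ?_
    have : {p : ℝ × ℝ | ¬ (({p : ℝ × ℝ | p.1 < p.2}.indicator K) p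
        + ({p : ℝ × ℝ | p.2 < p.1}.indicator K) p = K p)} ⊆ {p : ℝ × ℝ | p.1 = p.2} := by
      intro p hp
      by_contra h
      apply hp
      rcases lt_or_gt_of_ne (h : p.1 ≠ p.2) with h' | h'
      · simp [Set.indicator_of_mem, Set.indicator_of_notMem, h', asymm h']
      · simp [Set.indicator_of_mem, Set.indicator_of_notMem, h', asymm h']
    exact measure_mono_null this hdiag
  have hG : ∫ p, K p ∂(μ.prod μ) = conj (∫ t in Ioc a b, g t) * (∫ t in Ioc a b, g t) := by
    have h3 := integral_prod_mul (μ := μ) (ν := μ) (fun s => conj (g s)) g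
    rw [integral_conj] at h3
    simpa [hK_def] using h3
  -- Fubini for S
  have hSval : S = ∫ t in Ioc a b, conj (∫ s in Ioc a t, g s) * g t := by
    rw [hS_def, integral_prod_symm _ (hK.indicator hs)]
    refine integral_congr_ae ?_
    filter_upwards [ae_restrict_mem measurableSet_Ioc] with t ht
    have h2 : ∀ s : ℝ, ({p : ℝ × ℝ | p.1 < p.2}.indicator K) (s, t)
        = (({s : ℝ | s < t}.indicator fun s => conj (g s)) s) * g t := by
      intro s
      by_cases h : s < t <;>
        simp [Set.indicator, h, hK_def]
    simp_rw [h2]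
    rw [integral_mul_const]
    congr 1
    have hset : {s : ℝ | s < t} = Iio t := rfl
    rw [hset, integral_indicator (measurableSet_Iio : MeasurableSet (Iio t)), hμ,
      Measure.restrict_restrict measurableSet_Iio]
    have hset2 : Iio t ∩ Ioc a b = Ioo a t := by
      ext s
      constructor
      · rintro ⟨h1, h2, h3⟩; exact ⟨h2, h1⟩
      · rintro ⟨h1, h2⟩; exact ⟨h2, h1, le_trans h2.le ht.2⟩
    rw [hset2, ← integral_Ioc_eq_integral_Ioo, integral_conj]
  -- conclude
  have h2re : S + conj S = ((2 : ℝ) * S.re : ℂ) := by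
    rw [Complex.add_conj]
    push_cast
    ring
  have h4 : conj (∫ t in Ioc a b, g t) * (∫ t in Ioc a b, g t)
      = ((‖∫ t in Ioc a b, g t‖ ^ 2 : ℝ) : ℂ) := by
    rw [mul_comm, Complex.mul_conj]
    norm_cast
    simp [Complex.normSq_eq_norm_sq]
  have h5 : ((2 : ℝ) * S.re : ℂ) = ((‖∫ t in Ioc a b, g t‖ ^ 2 : ℝ) : ℂ) := by
    rw [← h2re, hsum, hG, h4]
  rw [← hSval]
  exact_mod_cast h5.symm

lemma expand_sq (z d : ℂ) : ‖z + d‖ ^ 2 = ‖z‖ ^ 2 + 2 * (conj z * d).re + ‖d‖ ^ 2 := by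
  have h1 : ∀ w : ℂ, ‖w‖ ^ 2 = Complex.normSq w := by
    intro w
    rw [Complex.normSq_eq_norm_sq]
  have h2 : (z * conj d).re = (conj z * d).re := by
    have : conj (z * conj d) = conj z * d := by
      rw [map_mul, Complex.conj_conj]
    rw [← this, Complex.conj_re]
  rw [h1, h1, h1, Complex.normSq_add, h2]
  ring

lemma key_aux {u g : ℝ → ℂ} (hu_cont : Continuous u) {a b : ℝ} (hab : a ≤ b)
    (hgi : IntegrableOn g (Icc a b))
    (hF : ∀ t ∈ Icc a b, u t - u a = ∫ s in Ioc a t, g s) :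
    ‖u b‖ ^ 2 = ‖u a‖ ^ 2 + 2 * (∫ t in Ioc a b, conj (u t) * g t).re := by
  have hgi' : IntegrableOn g (Ioc a b) := hgi.mono_set Ioc_subset_Icc_self
  have hint1 : IntegrableOn (fun t => conj (u t - u a) * g t) (Ioc a b) := by
    refine (IntegrableOn.continuousOn_mul ?_ hgi isCompact_Icc).mono_set Ioc_subset_Icc_self
    exact (Complex.continuous_conj.comp (hu_cont.sub continuous_const)).continuousOn
  have hint0 : IntegrableOn (fun t => conj (u a) * g t) (Ioc a b) := hgi'.const_mul _
  have hdecomp : ∫ t in Ioc a b, conj (u t) * g t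
      = conj (u a) * (∫ t in Ioc a b, g t) + ∫ t in Ioc a b, conj (u t - u a) * g t := by
    rw [← integral_const_mul, ← integral_add (hint0) (hint1)]
    refine setIntegral_congr_fun measurableSet_Ioc fun t ht => ?_
    simp only [map_sub]
    ring
  have hrepl : (∫ t in Ioc a b, conj (u t - u a) * g t)
      = ∫ t in Ioc a b, conj (∫ s in Ioc a t, g s) * g t := by
    refine setIntegral_congr_fun measurableSet_Ioc fun t ht => ?_
    rw [hF t (Ioc_subset_Icc_self ht)]
  have henergy := energy_aux hgi'
  have hub : u b = u a + ∫ t in Ioc a b, g t := by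
    have h := hF b (right_mem_Icc.mpr hab)
    linear_combination h
  rw [hub, expand_sq, hdecomp, hrepl, Complex.add_re, henergy]
  ring

/-- If `x ∈ L²_w(ℝ)` and `w·x` is locally absolutely continuous with a.e.
derivative `g = (w·x)' ∈ L²_w(ℝ)` (encoded via the fundamental theorem of
calculus), then `w·x` is bounded, with the explicit bound
`|(w·x)(ξ)|² ≤ |(w·x)(0)|² + 2‖x‖_{L²_w}‖(w·x)'‖_{L²_w}`. -/
theorem stmt_1 (w : ℝ → ℝ) (hw_cont : Continuous w) (hw_pos : ∀ ξ, 0 < w ξ)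
    (x g : ℝ → ℂ)
    (hx_meas : AEStronglyMeasurable x volume)
    (hx : Integrable fun ξ => w ξ * ‖x ξ‖ ^ 2)
    (hg_loc : LocallyIntegrable g)
    (hg : Integrable fun ξ => w ξ * ‖g ξ‖ ^ 2)
    (hFTC : ∀ a b : ℝ, (w b : ℂ) * x b - (w a : ℂ) * x a = ∫ ζ in a..b, g ζ) :
    (∃ M : ℝ, ∀ ξ : ℝ, ‖(w ξ : ℂ) * x ξ‖ ≤ M) ∧
    ∀ ξ : ℝ, ‖(w ξ : ℂ) * x ξ‖ ^ 2 ≤ ‖(w 0 : ℂ) * x 0‖ ^ 2 +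
      2 * Real.sqrt (∫ ζ, w ζ * ‖x ζ‖ ^ 2) * Real.sqrt (∫ ζ, w ζ * ‖g ζ‖ ^ 2) := by
  set u : ℝ → ℂ := fun t => (w t : ℂ) * x t with hu_def
  set A : ℝ := ∫ ζ, w ζ * ‖x ζ‖ ^ 2 with hA_def
  set B : ℝ := ∫ ζ, w ζ * ‖g ζ‖ ^ 2 with hB_def
  set C : ℝ := Real.sqrt A * Real.sqrt B with hC_def
  have hC_nonneg : 0 ≤ C := mul_nonneg (Real.sqrt_nonneg _) (Real.sqrt_nonneg _)
  -- interval integrability of g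
  have hII : ∀ a b : ℝ, IntervalIntegrable g volume a b := fun a b =>
    intervalIntegrable_iff.mpr
      ((hg_loc.integrableOn_isCompact isCompact_uIcc).mono_set Set.Ioc_subset_Icc_self)
  -- continuity of u
  have hu_cont : Continuous u := by
    have h1 : Continuous fun t => u 0 + ∫ s in (0:ℝ)..t, g s :=
      continuous_const.add (intervalIntegral.continuous_primitive hII 0)
    exact h1.congr fun t => by linear_combination -(hFTC 0 t)
  -- pointwise norm of u
  have hnu : ∀ t, ‖u t‖ = w t * ‖x t‖ := by
    intro t
    rw [hu_def]
    simp [norm_mul, Complex.norm_real, abs_of_pos (hw_pos t)]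
  -- L² functions
  set F : ℝ → ℝ := fun ζ => Real.sqrt (w ζ) * ‖x ζ‖ with hF_def
  set H : ℝ → ℝ := fun ζ => Real.sqrt (w ζ) * ‖g ζ‖ with hH_def
  have hF_meas : AEStronglyMeasurable F volume :=
    ((Real.continuous_sqrt.comp hw_cont).aestronglyMeasurable).mul hx_meas.norm
  have hH_meas : AEStronglyMeasurable H volume :=
    ((Real.continuous_sqrt.comp hw_cont).aestronglyMeasurable).mul
      hg_loc.aestronglyMeasurable.norm
  have hFsq : ∀ ζ, F ζ ^ 2 = w ζ * ‖x ζ‖ ^ 2 := fun ζ => by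
    rw [hF_def]; rw [mul_pow, Real.sq_sqrt (hw_pos ζ).le]
  have hHsq : ∀ ζ, H ζ ^ 2 = w ζ * ‖g ζ‖ ^ 2 := fun ζ => by
    rw [hH_def]; rw [mul_pow, Real.sq_sqrt (hw_pos ζ).le]
  have hF2 : MemLp F 2 volume := (memLp_two_iff_integrable_sq hF_meas).mpr
    (hx.congr (Filter.Eventually.of_forall fun ζ => (hFsq ζ).symm))
  have hH2 : MemLp H 2 volume := (memLp_two_iff_integrable_sq hH_meas).mpr
    (hg.congr (Filter.Eventually.of_forall fun ζ => (hHsq ζ).symm))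
  have hFH_eq : ∀ ζ, F ζ * H ζ = ‖u ζ‖ * ‖g ζ‖ := fun ζ => by
    rw [hnu ζ, hF_def, hH_def]
    have h := Real.mul_self_sqrt (hw_pos ζ).le
    calc Real.sqrt (w ζ) * ‖x ζ‖ * (Real.sqrt (w ζ) * ‖g ζ‖)
        = Real.sqrt (w ζ) * Real.sqrt (w ζ) * (‖x ζ‖ * ‖g ζ‖) := by ring
      _ = w ζ * ‖x ζ‖ * ‖g ζ‖ := by rw [h]; ring
  -- integrability of the product
  have hFH : Integrable (fun ζ => ‖u ζ‖ * ‖g ζ‖) volume := by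
    have h1 : MemLp (F • H) 1 volume := hH2.smul hF2 (hpqr := ⟨by simp [ENNReal.inv_two_add_inv_two]⟩)
    have h2 : Integrable (fun ζ => F ζ * H ζ) volume := memLp_one_iff_integrable.mp h1
    exact h2.congr (Filter.Eventually.of_forall fun ζ => by simpa using hFH_eq ζ)
  -- Cauchy–Schwarz
  have hCS : ∫ ζ, ‖u ζ‖ * ‖g ζ‖ ≤ C := by
    have hpq : (2:ℝ).HolderConjugate 2 :=
      (Real.holderConjugate_iff_eq_conjExponent (by norm_num)).mpr (by norm_num)
    have h2 : ENNReal.ofReal (2:ℝ) = 2 := by norm_num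
    have : ∫ a, F a * H a ≤ (∫ a, F a ^ (2:ℝ)) ^ (1 / (2:ℝ)) * (∫ a, H a ^ (2:ℝ)) ^ (1 / (2:ℝ)) :=
      integral_mul_le_Lp_mul_Lq_of_nonneg (μ := volume) hpq
      (Filter.Eventually.of_forall fun ζ => mul_nonneg (Real.sqrt_nonneg _) (norm_nonneg _))
      (Filter.Eventually.of_forall fun ζ => mul_nonneg (Real.sqrt_nonneg _) (norm_nonneg _))
      (h2 ▸ hF2) (h2 ▸ hH2)
    have hFr : ∀ ζ, F ζ ^ (2:ℝ) = w ζ * ‖x ζ‖ ^ 2 := fun ζ => by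
      rw [show ((2:ℝ)) = ((2:ℕ):ℝ) by norm_num, Real.rpow_natCast, hFsq ζ]
    have hHr : ∀ ζ, H ζ ^ (2:ℝ) = w ζ * ‖g ζ‖ ^ 2 := fun ζ => by
      rw [show ((2:ℝ)) = ((2:ℕ):ℝ) by norm_num, Real.rpow_natCast, hHsq ζ]
    simp_rw [hFr, hHr, hFH_eq] at this
    calc ∫ ζ, ‖u ζ‖ * ‖g ζ‖ ≤ (∫ ζ, w ζ * ‖x ζ‖ ^ 2) ^ ((1:ℝ)/2) * (∫ ζ, w ζ * ‖g ζ‖ ^ 2) ^ ((1:ℝ)/2) := this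
      _ = C := by
        rw [hC_def, hA_def, hB_def, Real.sqrt_eq_rpow, Real.sqrt_eq_rpow]
  -- the key estimate for set integrals
  have hbound : ∀ a b : ℝ, a ≤ b → |(∫ t in Ioc a b, conj (u t) * g t).re| ≤ C := by
    intro a b hab
    have h1 : |(∫ t in Ioc a b, conj (u t) * g t).re| ≤ ‖∫ t in Ioc a b, conj (u t) * g t‖ :=
      Complex.abs_re_le_norm _
    have h2 : ‖∫ t in Ioc a b, conj (u t) * g t‖ ≤ ∫ t in Ioc a b, ‖conj (u t) * g t‖ :=
      norm_integral_le_integral_norm _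
    have h3 : (∫ t in Ioc a b, ‖conj (u t) * g t‖) = ∫ t in Ioc a b, ‖u t‖ * ‖g t‖ := by
      refine setIntegral_congr_fun measurableSet_Ioc fun t _ => ?_
      rw [norm_mul, RCLike.norm_conj]
    have h4 : (∫ t in Ioc a b, ‖u t‖ * ‖g t‖) ≤ ∫ ζ, ‖u ζ‖ * ‖g ζ‖ :=
      setIntegral_le_integral hFH
        (Filter.Eventually.of_forall fun ζ => mul_nonneg (norm_nonneg _) (norm_nonneg _))
    calc |(∫ t in Ioc a b, conj (u t) * g t).re| ≤ _ := h1
      _ ≤ _ := h2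
      _ = _ := h3
      _ ≤ _ := h4
      _ ≤ C := hCS
  -- key identity
  have hkey : ∀ a b : ℝ, a ≤ b →
      ‖u b‖ ^ 2 = ‖u a‖ ^ 2 + 2 * (∫ t in Ioc a b, conj (u t) * g t).re := by
    intro a b hab
    refine key_aux hu_cont hab (hg_loc.integrableOn_isCompact isCompact_Icc) fun t ht => ?_
    rw [← intervalIntegral.integral_of_le ht.1]
    exact hFTC a t
  -- the main pointwise estimate
  have hmain : ∀ ξ : ℝ, ‖u ξ‖ ^ 2 ≤ ‖u 0‖ ^ 2 + 2 * C := by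
    intro ξ
    rcases le_or_gt 0 ξ with h | h
    · have := hkey 0 ξ h
      have hb := hbound 0 ξ h
      rw [this]
      have : (∫ t in Ioc 0 ξ, conj (u t) * g t).re ≤ C := (abs_le.mp hb).2
      linarith
    · have := hkey ξ 0 h.le
      have hb := hbound ξ 0 h.le
      have : ‖u ξ‖ ^ 2 = ‖u 0‖ ^ 2 - 2 * (∫ t in Ioc ξ 0, conj (u t) * g t).re := by
        linarith [hkey ξ 0 h.le]
      rw [this]
      have h5 : -C ≤ (∫ t in Ioc ξ 0, conj (u t) * g t).re := (abs_le.mp hb).1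
      linarith
  constructor
  · refine ⟨Real.sqrt (‖u 0‖ ^ 2 + 2 * C), fun ξ => ?_⟩
    rw [Real.le_sqrt (norm_nonneg _) (by positivity)]
    exact hmain ξ
  · intro ξ
    have := hmain ξ
    rw [hC_def] at this
    linarith
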